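/- Let T and T_x be positive self-adjoint bounded operators on a separable Hilbert space H, λ > 0, and set Δ₂ := ‖(T+λ)^{-1/2}(T − T_x)‖, viewed as a bound. Then for any ω ∈ H, ‖(T_x+λ)^{-1/2} T_x (I−P) ω‖_H ≤ ‖(T+λ)^{1/2}(T_x+λ)^{-1/2}‖ · (Δ₂ ‖(I−P)ω‖ + ‖T^{1/2}(I−P)ω‖), where P is an orthogonal projection. -/

import Mathlib

set_option maxHeartbeats 1000000

theorem projected_variance_split {H : Type*} [NormedAddCommGroup H] [InnerProductSpace ℂ H]
    [CompleteSpace H] [TopologicalSpace.SeparableSpace H]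
    (T Tx P : H →L[ℂ] H) (hT : T.IsPositive) (hTx : Tx.IsPositive)
    (hP : IsIdempotentElem P) (hPsa : IsSelfAdjoint P)
    (l : ℝ) (hl : 0 < l) (ω : H) :
    ‖cfc (fun u : ℝ => (Real.sqrt (u + l))⁻¹) Tx (Tx ((1 - P) ω))‖
      ≤ ‖cfc (fun u : ℝ => Real.sqrt (u + l)) T * cfc (fun u : ℝ => (Real.sqrt (u + l))⁻¹) Tx‖
        * (‖cfc (fun u : ℝ => (Real.sqrt (u + l))⁻¹) T * (T - Tx)‖ * ‖(1 - P) ω‖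
            + ‖cfc (fun u : ℝ => Real.sqrt u) T ((1 - P) ω)‖) := by
  have hTsa : IsSelfAdjoint T := hT.isSelfAdjoint
  have hTxsa : IsSelfAdjoint Tx := hTx.isSelfAdjoint
  have hspT : ∀ x ∈ spectrum ℝ T, 0 ≤ x :=
    fun x hx => spectrum_nonneg_of_nonneg ((T.nonneg_iff_isPositive).mpr hT) hx
  have hspTx : ∀ x ∈ spectrum ℝ Tx, 0 ≤ x :=
    fun x hx => spectrum_nonneg_of_nonneg ((Tx.nonneg_iff_isPositive).mpr hTx) hx
  have hne : ∀ x : ℝ, 0 ≤ x → Real.sqrt (x + l) ≠ 0 :=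
    fun x hx => ne_of_gt (Real.sqrt_pos.mpr (by linarith))
  have hc1 : ContinuousOn (fun u : ℝ => Real.sqrt (u + l)) (spectrum ℝ T) := by fun_prop
  have hc2 : ContinuousOn (fun u : ℝ => (Real.sqrt (u + l))⁻¹) (spectrum ℝ T) :=
    ContinuousOn.inv₀ (by fun_prop) (fun x hx => hne x (hspT x hx))
  have hc2x : ContinuousOn (fun u : ℝ => (Real.sqrt (u + l))⁻¹) (spectrum ℝ Tx) :=
    ContinuousOn.inv₀ (by fun_prop) (fun x hx => hne x (hspTx x hx))
  set A := cfc (fun u : ℝ => (Real.sqrt (u + l))⁻¹) Tx with hA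
  set B := cfc (fun u : ℝ => Real.sqrt (u + l)) T with hB
  set C := cfc (fun u : ℝ => (Real.sqrt (u + l))⁻¹) T with hC
  set S := cfc (fun u : ℝ => Real.sqrt u) T with hS
  set v := (1 - P) ω with hv
  have hBC : B * C = 1 := by
    rw [hB, hC, ← cfc_mul _ _ T hc1 hc2, ← cfc_one (R := ℝ) T hTsa]
    exact cfc_congr fun x hx => mul_inv_cancel₀ (hne x (hspT x hx))
  have hAsa : IsSelfAdjoint A := cfc_predicate _ Tx
  have hBsa : IsSelfAdjoint B := cfc_predicate _ T
  -- ‖A * B‖ = ‖B * A‖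
  have hnormswap : ‖A * B‖ = ‖B * A‖ := by
    conv_rhs => rw [← norm_star (B * A), star_mul, hAsa.star_eq, hBsa.star_eq]
  have key1 : ‖A (Tx v)‖ ≤ ‖B * A‖ * ‖(C * Tx) v‖ := by
    have : A (Tx v) = (A * B) ((C * Tx) v) := by
      have : A * Tx = (A * B) * (C * Tx) := by
        rw [mul_assoc, ← mul_assoc B C, hBC, one_mul]
      calc A (Tx v) = (A * Tx) v := rfl
        _ = ((A * B) * (C * Tx)) v := by rw [this]
        _ = (A * B) ((C * Tx) v) := rfl
    rw [this, ← hnormswap]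
    exact (A * B).le_opNorm _
  have key2 : ‖(C * Tx) v‖ ≤ ‖C * (T - Tx)‖ * ‖v‖ + ‖S v‖ := by
    have hsplit : (C * Tx) v = (C * T) v - (C * (T - Tx)) v := by
      simp [mul_sub, ContinuousLinearMap.sub_apply]
    have h1 : ‖(C * (T - Tx)) v‖ ≤ ‖C * (T - Tx)‖ * ‖v‖ := (C * (T - Tx)).le_opNorm v
    have h2 : ‖(C * T) v‖ ≤ ‖S v‖ := by
      set D := cfc (fun u : ℝ => Real.sqrt u * (Real.sqrt (u + l))⁻¹) T with hD
      have e1 : cfc (fun u : ℝ => (Real.sqrt (u + l))⁻¹ * u) T = C * T := by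
        rw [hC, cfc_mul (fun u : ℝ => (Real.sqrt (u + l))⁻¹) (fun u : ℝ => u) T hc2 (by fun_prop),
          cfc_id' (R := ℝ) T hTsa]
      have e2 : cfc (fun u : ℝ => (Real.sqrt u * (Real.sqrt (u + l))⁻¹) * Real.sqrt u) T = D * S := by
        rw [hD, hS, cfc_mul (fun u : ℝ => Real.sqrt u * (Real.sqrt (u + l))⁻¹)
          (fun u : ℝ => Real.sqrt u) T (by fun_prop) (by fun_prop)]
      have hCT : C * T = D * S := by
        rw [← e1, ← e2]
        exact cfc_congr fun x hx => by
          have h0 := hspT x hx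
          have : Real.sqrt x * Real.sqrt x = x := Real.mul_self_sqrt h0
          field_simp
          rw [Real.sq_sqrt h0]
      have hDle : ‖D‖ ≤ 1 := by
        apply norm_cfc_le zero_le_one
        intro x hx
        have h0 := hspT x hx
        rw [Real.norm_eq_abs, abs_of_nonneg (by positivity)]
        rw [← div_eq_mul_inv, div_le_one (Real.sqrt_pos.mpr (by linarith))]
        exact Real.sqrt_le_sqrt (by linarith)
      calc ‖(C * T) v‖ = ‖D (S v)‖ := by rw [hCT]; rfl
        _ ≤ ‖D‖ * ‖S v‖ := D.le_opNorm _
        _ ≤ 1 * ‖S v‖ := by gcongr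
        _ = ‖S v‖ := one_mul _
    calc ‖(C * Tx) v‖ ≤ ‖(C * T) v‖ + ‖(C * (T - Tx)) v‖ := hsplit ▸ norm_sub_le _ _
      _ ≤ ‖S v‖ + ‖C * (T - Tx)‖ * ‖v‖ := add_le_add h2 h1
      _ = ‖C * (T - Tx)‖ * ‖v‖ + ‖S v‖ := add_comm _ _
  calc ‖A (Tx v)‖ ≤ ‖B * A‖ * ‖(C * Tx) v‖ := key1
    _ ≤ ‖B * A‖ * (‖C * (T - Tx)‖ * ‖v‖ + ‖S v‖) := by
        exact mul_le_mul_of_nonneg_left key2 (norm_nonneg _)
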